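/- For every fixed θ ∈ ℝ^N, the map F : ℝ^N → ℝ^N defined by F(x)_i = x_i + Σ_{j≠i} ψ_θ(x_i−x_j, θ_i−θ_j) is a C¹ diffeomorphism of ℝ^N onto ℝ^N: it is bijective, continuously differentiable, and its inverse is continuously differentiable. In particular, for every y ∈ ℝ^N the system of equations y_i = x_i + Σ_{j≠i} ψ_θ(x_i−x_j, θ_i−θ_j) (i = 1,…,N) has a unique solution x ∈ ℝ^N. -/

import Mathlib

open Finset Topology Filter

theorem aux1 {ψ ψθ : ℝ → ℝ → ℝ}
    (hC2 : ContDiff ℝ 2 (fun q : ℝ × ℝ => ψ q.1 q.2))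
    (hψθ : ∀ x t, HasDerivAt (fun t' => ψ x t') (ψθ x t) t) :
    ∀ q : ℝ × ℝ, ψθ q.1 q.2 = fderiv ℝ (fun q : ℝ × ℝ => ψ q.1 q.2) q (0, 1) := by
  intro q
  have hd : DifferentiableAt ℝ (fun q : ℝ × ℝ => ψ q.1 q.2) q :=
    (hC2.differentiable (by norm_num)) q
  have hc : HasDerivAt (fun t : ℝ => ((q.1, t) : ℝ × ℝ)) (0, 1) q.2 :=
    (hasDerivAt_const q.2 q.1).prodMk (hasDerivAt_id q.2)
  have := hd.hasFDerivAt.comp_hasDerivAt q.2 hc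
  simpa using (hψθ q.1 q.2).unique this

theorem aux2 {ψ ψθ : ℝ → ℝ → ℝ}
    (hC2 : ContDiff ℝ 2 (fun q : ℝ × ℝ => ψ q.1 q.2))
    (hψθ : ∀ x t, HasDerivAt (fun t' => ψ x t') (ψθ x t) t) :
    ContDiff ℝ 1 (fun q : ℝ × ℝ => ψθ q.1 q.2) := by
  have h1 : ContDiff ℝ 1 (fderiv ℝ (fun q : ℝ × ℝ => ψ q.1 q.2)) :=
    hC2.fderiv_right (m := 1) (by norm_num)
  have h2 : ContDiff ℝ 1 (fun q : ℝ × ℝ =>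
      fderiv ℝ (fun q : ℝ × ℝ => ψ q.1 q.2) q (0, 1)) :=
    (ContinuousLinearMap.apply ℝ ℝ ((0:ℝ), (1:ℝ))).contDiff.comp h1
  have : (fun q : ℝ × ℝ => ψθ q.1 q.2)
      = fun q : ℝ × ℝ => fderiv ℝ (fun q : ℝ × ℝ => ψ q.1 q.2) q (0, 1) :=
    funext fun q => aux1 hC2 hψθ q
  rw [this]; exact h2

theorem aux1x {ψ ψx : ℝ → ℝ → ℝ}
    (hC2 : ContDiff ℝ 2 (fun q : ℝ × ℝ => ψ q.1 q.2))
    (hψx : ∀ x t, HasDerivAt (fun x' => ψ x' t) (ψx x t) x) :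
    ∀ q : ℝ × ℝ, ψx q.1 q.2 = fderiv ℝ (fun q : ℝ × ℝ => ψ q.1 q.2) q (1, 0) := by
  intro q
  have hd : DifferentiableAt ℝ (fun q : ℝ × ℝ => ψ q.1 q.2) q :=
    (hC2.differentiable (by norm_num)) q
  have hc : HasDerivAt (fun a : ℝ => ((a, q.2) : ℝ × ℝ)) (1, 0) q.1 :=
    (hasDerivAt_id q.1).prodMk (hasDerivAt_const q.1 q.2)
  have := hd.hasFDerivAt.comp_hasDerivAt q.1 hc
  simpa using (hψx q.1 q.2).unique this

theorem aux3 {ψ ψx ψθ ψxθ : ℝ → ℝ → ℝ}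
    (hC2 : ContDiff ℝ 2 (fun q : ℝ × ℝ => ψ q.1 q.2))
    (hψx : ∀ x t, HasDerivAt (fun x' => ψ x' t) (ψx x t) x)
    (hψθ : ∀ x t, HasDerivAt (fun t' => ψ x t') (ψθ x t) t)
    (hψxθ : ∀ x t, HasDerivAt (fun t' => ψx x t') (ψxθ x t) t) :
    ∀ x t, HasDerivAt (fun a => ψθ a t) (ψxθ x t) x := by
  intro x t
  set f : ℝ × ℝ → ℝ := fun q => ψ q.1 q.2 with hf
  set f' : ℝ × ℝ → (ℝ × ℝ) →L[ℝ] ℝ := fderiv ℝ f with hf'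
  have hdf : Differentiable ℝ f := hC2.differentiable (by norm_num)
  have hdf' : Differentiable ℝ f' := (hC2.fderiv_right (m := 1) (by norm_num)).differentiable one_ne_zero
  set f'' : (ℝ × ℝ) →L[ℝ] (ℝ × ℝ) →L[ℝ] ℝ := fderiv ℝ f' (x, t) with hf''
  have hsymm : ∀ v w, f'' v w = f'' w v :=
    second_derivative_symmetric (fun y => (hdf y).hasFDerivAt) (hdf' (x, t)).hasFDerivAt
  -- derivative of a ↦ f' (a,t) (0,1) at x is f'' (1,0) (0,1)
  have hA : HasFDerivAt (fun q => f' q ((0:ℝ), (1:ℝ)))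
      ((ContinuousLinearMap.apply ℝ ℝ ((0:ℝ),(1:ℝ))).comp f'') (x, t) :=
    (ContinuousLinearMap.apply ℝ ℝ ((0:ℝ),(1:ℝ))).hasFDerivAt.comp (x, t)
      (hdf' (x, t)).hasFDerivAt
  have hcx : HasDerivAt (fun a : ℝ => ((a, t) : ℝ × ℝ)) (1, 0) x :=
    (hasDerivAt_id x).prodMk (hasDerivAt_const x t)
  have h1 : HasDerivAt (fun a => f' (a, t) ((0:ℝ), (1:ℝ))) (f'' (1,0) (0,1)) x := by
    simpa [Function.comp_def] using hA.comp_hasDerivAt x hcx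
  -- derivative of t' ↦ f' (x,t') (1,0) at t is f'' (0,1) (1,0)
  have hB : HasFDerivAt (fun q => f' q ((1:ℝ), (0:ℝ)))
      ((ContinuousLinearMap.apply ℝ ℝ ((1:ℝ),(0:ℝ))).comp f'') (x, t) :=
    (ContinuousLinearMap.apply ℝ ℝ ((1:ℝ),(0:ℝ))).hasFDerivAt.comp (x, t)
      (hdf' (x, t)).hasFDerivAt
  have hct : HasDerivAt (fun t' : ℝ => ((x, t') : ℝ × ℝ)) (0, 1) t :=
    (hasDerivAt_const t x).prodMk (hasDerivAt_id t)
  have h2 : HasDerivAt (fun t' => f' (x, t') ((1:ℝ), (0:ℝ))) (f'' (0,1) (1,0)) t := by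
    simpa [Function.comp_def] using hB.comp_hasDerivAt t hct
  have h2' : HasDerivAt (fun t' => ψx x t') (f'' (0,1) (1,0)) t := by
    have : (fun t' => ψx x t') = fun t' => f' (x, t') ((1:ℝ), (0:ℝ)) :=
      funext fun t' => aux1x hC2 hψx (x, t')
    rw [this]; exact h2
  have hx9 : ψxθ x t = f'' (1,0) (0,1) := by
    rw [(hψxθ x t).unique h2']; exact (hsymm _ _).symm
  have h1' : (fun a => ψθ a t) = fun a => f' (a, t) ((0:ℝ), (1:ℝ)) :=
    funext fun a => aux1 hC2 hψθ (a, t)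
  rw [h1', hx9]
  exact h1

theorem aux4 {ψ ψx ψθ ψxθ : ℝ → ℝ → ℝ}
    (hC2 : ContDiff ℝ 2 (fun q : ℝ × ℝ => ψ q.1 q.2))
    (hψx : ∀ x t, HasDerivAt (fun x' => ψ x' t) (ψx x t) x)
    (hψθ : ∀ x t, HasDerivAt (fun t' => ψ x t') (ψθ x t) t)
    (hψxθ : ∀ x t, HasDerivAt (fun t' => ψx x t') (ψxθ x t) t)
    (hpos : ∀ x t, 0 ≤ ψxθ x t) :
    ∀ t, Monotone (fun a => ψθ a t) := by
  intro t
  apply monotone_of_deriv_nonneg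
  · exact fun a => (aux3 hC2 hψx hψθ hψxθ a t).differentiableAt
  · intro a
    rw [(aux3 hC2 hψx hψθ hψxθ a t).deriv]
    exact hpos a t

theorem aux5 {ψ ψθ : ℝ → ℝ → ℝ}
    (hψθ : ∀ x t, HasDerivAt (fun t' => ψ x t') (ψθ x t) t)
    (hsym : ∀ x t, ψ (-x) (-t) = ψ x t) :
    ∀ x t, ψθ (-x) (-t) = -ψθ x t := by
  intro x t
  have h1 : HasDerivAt (fun t' => ψ (-x) (-t')) (-ψθ (-x) (-t)) t := by
    simpa [Function.comp_def] using (hψθ (-x) (-t)).comp t (hasDerivAt_neg t)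
  have h2 : (fun t' => ψ (-x) (-t')) = fun t' => ψ x t' := funext fun t' => hsym x t'
  rw [h2] at h1
  have := (hψθ x t).unique h1
  linarith

theorem aux_key {N : ℕ} (g : ℝ → ℝ → ℝ)
    (hmono : ∀ t, Monotone (fun a => g a t))
    (hanti : ∀ x t, g (-x) (-t) = - g x t)
    (θ : Fin N → ℝ) (x y : Fin N → ℝ) :
    (∑ i, (x i - y i) * (x i - y i)) ≤
      ∑ i, (((x i + ∑ j ∈ Finset.univ.erase i, g (x i - x j) (θ i - θ j))
        - (y i + ∑ j ∈ Finset.univ.erase i, g (y i - y j) (θ i - θ j))) * (x i - y i)) := by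
  classical
  set c : Fin N → Fin N → ℝ := fun i j =>
    (g (x i - x j) (θ i - θ j) - g (y i - y j) (θ i - θ j)) * (x i - y i) with hc
  have hswap : (∑ i, ∑ j ∈ Finset.univ.erase i, c i j)
      = ∑ i, ∑ j ∈ Finset.univ.erase i, c j i := by
    exact Finset.sum_comm' fun i j => by
      simp only [Finset.mem_univ, true_and, and_true, Finset.mem_erase]
      exact ne_comm
  have hpair : ∀ i j : Fin N, 0 ≤ c i j + c j i := by
    intro i j
    have h1 : g (x j - x i) (θ j - θ i) = - g (x i - x j) (θ i - θ j) := by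
      have := hanti (x i - x j) (θ i - θ j)
      rw [show -(x i - x j) = x j - x i by ring, show -(θ i - θ j) = θ j - θ i by ring] at this
      exact this
    have h2 : g (y j - y i) (θ j - θ i) = - g (y i - y j) (θ i - θ j) := by
      have := hanti (y i - y j) (θ i - θ j)
      rw [show -(y i - y j) = y j - y i by ring, show -(θ i - θ j) = θ j - θ i by ring] at this
      exact this
    have h3 : 0 ≤ (g (x i - x j) (θ i - θ j) - g (y i - y j) (θ i - θ j))
        * ((x i - x j) - (y i - y j)) := by
      rcases le_total (x i - x j) (y i - y j) with h | h
      · have := hmono (θ i - θ j) h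
        nlinarith
      · have := hmono (θ i - θ j) h
        nlinarith
    simp only [hc, h1, h2]
    nlinarith [h3]
  have hS : 0 ≤ ∑ i, ∑ j ∈ Finset.univ.erase i, c i j := by
    have h2S : 0 ≤ ∑ i, ∑ j ∈ Finset.univ.erase i, (c i j + c j i) :=
      Finset.sum_nonneg fun i _ => Finset.sum_nonneg fun j _ => hpair i j
    have : ∑ i, ∑ j ∈ Finset.univ.erase i, (c i j + c j i)
        = (∑ i, ∑ j ∈ Finset.univ.erase i, c i j) + ∑ i, ∑ j ∈ Finset.univ.erase i, c j i := by
      simp [Finset.sum_add_distrib]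
    rw [this, ← hswap] at h2S
    linarith
  have hexp : ∀ i : Fin N,
      ((x i + ∑ j ∈ Finset.univ.erase i, g (x i - x j) (θ i - θ j))
        - (y i + ∑ j ∈ Finset.univ.erase i, g (y i - y j) (θ i - θ j))) * (x i - y i)
      = (x i - y i) * (x i - y i) + ∑ j ∈ Finset.univ.erase i, c i j := by
    intro i
    have h : ∑ j ∈ Finset.univ.erase i, c i j
        = ((∑ j ∈ Finset.univ.erase i, g (x i - x j) (θ i - θ j))
          - ∑ j ∈ Finset.univ.erase i, g (y i - y j) (θ i - θ j)) * (x i - y i) := by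
      rw [sub_mul, Finset.sum_mul, Finset.sum_mul, ← Finset.sum_sub_distrib]
      exact Finset.sum_congr rfl fun j _ => by simp [hc]; ring
    rw [h]; ring
  calc (∑ i, (x i - y i) * (x i - y i))
      ≤ (∑ i, (x i - y i) * (x i - y i)) + ∑ i, ∑ j ∈ Finset.univ.erase i, c i j :=
        le_add_of_nonneg_right hS
    _ = ∑ i, ((x i - y i) * (x i - y i) + ∑ j ∈ Finset.univ.erase i, c i j) := by
        rw [Finset.sum_add_distrib]
    _ = _ := Finset.sum_congr rfl fun i _ => (hexp i).symm

theorem stmt1 (N : ℕ) (ε : ℝ) (hε : 0 < ε)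
    (ψ ψx ψθ ψxθ : ℝ → ℝ → ℝ)
    (hC2 : ContDiff ℝ 2 (fun q : ℝ × ℝ => ψ q.1 q.2))
    (hψx : ∀ x t, HasDerivAt (fun x' => ψ x' t) (ψx x t) x)
    (hψθ : ∀ x t, HasDerivAt (fun t' => ψ x t') (ψθ x t) t)
    (hψxθ : ∀ x t, HasDerivAt (fun t' => ψx x t') (ψxθ x t) t)
    (hpos : ∀ x t, 0 ≤ ψxθ x t)
    (hsym : ∀ x t, ψ (-x) (-t) = ψ x t)
    (hrange : ∀ x t, ε ≤ |x| → ψx x t = 0)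
    (θ : Fin N → ℝ)
    (F : (Fin N → ℝ) → (Fin N → ℝ))
    (hF : ∀ x i, F x i = x i + ∑ j ∈ Finset.univ.erase i, ψθ (x i - x j) (θ i - θ j)) :
    Function.Bijective F ∧ ContDiff ℝ 1 F ∧ ContDiff ℝ 1 (Function.invFun F) ∧
      ∀ y : Fin N → ℝ, ∃! x : Fin N → ℝ,
        ∀ i, y i = x i + ∑ j ∈ Finset.univ.erase i, ψθ (x i - x j) (θ i - θ j) := by
  classical
  have hψθC1 : ContDiff ℝ 1 (fun q : ℝ × ℝ => ψθ q.1 q.2) := aux2 hC2 hψθ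
  have hmono : ∀ t, Monotone (fun a => ψθ a t) := aux4 hC2 hψx hψθ hψxθ hpos
  have hanti : ∀ x t, ψθ (-x) (-t) = -ψθ x t := aux5 hψθ hsym
  -- the key monotonicity inequality
  have hkey : ∀ x y : Fin N → ℝ, (∑ i, (x i - y i) * (x i - y i)) ≤
      ∑ i, ((F x i - F y i) * (x i - y i)) := by
    intro x y
    simpa only [hF] using aux_key ψθ hmono hanti θ x y
  -- F is C¹
  have hFC1 : ContDiff ℝ 1 F := by
    have : F = fun x i => x i + ∑ j ∈ Finset.univ.erase i, ψθ (x i - x j) (θ i - θ j) := by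
      funext x i; exact hF x i
    rw [this]
    apply contDiff_pi.2
    intro i
    apply ContDiff.add
    · exact (ContinuousLinearMap.proj (R := ℝ) (φ := fun _ : Fin N => ℝ) i).contDiff
    · apply ContDiff.sum
      intro j _
      exact hψθC1.comp
        ((((ContinuousLinearMap.proj (R := ℝ) (φ := fun _ : Fin N => ℝ) i).contDiff).sub
          (ContinuousLinearMap.proj (R := ℝ) (φ := fun _ : Fin N => ℝ) j).contDiff).prodMk
          contDiff_const)
  have hdF : Differentiable ℝ F := hFC1.differentiable one_ne_zero
  -- injectivity
  have hinj : Function.Injective F := by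
    intro x y hxy
    have h := hkey x y
    rw [hxy] at h
    simp only [sub_self, zero_mul, Finset.sum_const_zero] at h
    funext i
    have h1 : (x i - y i) * (x i - y i) ≤ ∑ j, (x j - y j) * (x j - y j) :=
      Finset.single_le_sum (f := fun j => (x j - y j) * (x j - y j))
        (fun j _ => mul_self_nonneg _) (Finset.mem_univ i)
    nlinarith
  -- anti-Lipschitz bound
  have hAL : ∀ x y : Fin N → ℝ, dist x y ≤ N * dist (F x) (F y) := by
    intro x y
    rcases eq_or_ne x y with rfl | hne
    · simp [dist_nonneg]
    have hd : (0:ℝ) < dist x y := dist_pos.2 hne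
    rw [dist_eq_norm, dist_eq_norm] at *
    have hsq : ‖x - y‖ * ‖x - y‖ ≤ (N : ℝ) * ‖F x - F y‖ * ‖x - y‖ := by
      have h1 : ∀ i, |x i - y i| ≤ ‖x - y‖ := by
        intro i
        simpa using norm_le_pi_norm (x - y) i
      have h2 : ∀ i, |F x i - F y i| ≤ ‖F x - F y‖ := by
        intro i
        simpa using norm_le_pi_norm (F x - F y) i
      have h3 : (∑ i, (F x i - F y i) * (x i - y i)) ≤ (N : ℝ) * ‖F x - F y‖ * ‖x - y‖ := by
        calc (∑ i, (F x i - F y i) * (x i - y i))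
            ≤ ∑ _i : Fin N, ‖F x - F y‖ * ‖x - y‖ := by
              apply Finset.sum_le_sum
              intro i _
              calc (F x i - F y i) * (x i - y i) ≤ |(F x i - F y i) * (x i - y i)| := le_abs_self _
                _ = |F x i - F y i| * |x i - y i| := abs_mul _ _
                _ ≤ ‖F x - F y‖ * ‖x - y‖ :=
                    mul_le_mul (h2 i) (h1 i) (abs_nonneg _) (norm_nonneg _)
          _ = (N : ℝ) * (‖F x - F y‖ * ‖x - y‖) := by
              simp [Finset.sum_const, Finset.card_univ]
          _ = (N : ℝ) * ‖F x - F y‖ * ‖x - y‖ := by ring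
      -- ‖x-y‖² ≤ ∑ (x i - y i)²
      have h4 : ‖x - y‖ * ‖x - y‖ ≤ ∑ i, (x i - y i) * (x i - y i) := by
        have hS : 0 ≤ ∑ i, (x i - y i) * (x i - y i) :=
          Finset.sum_nonneg fun i _ => mul_self_nonneg _
        have hnn : 0 ≤ Real.sqrt (∑ i, (x i - y i) * (x i - y i)) := Real.sqrt_nonneg _
        have h5 : ‖x - y‖ ≤ Real.sqrt (∑ i, (x i - y i) * (x i - y i)) := by
          apply pi_norm_le_iff_of_nonneg hnn |>.2
          intro i
          have h6 : |x i - y i| * |x i - y i| ≤ ∑ j, (x j - y j) * (x j - y j) := by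
            rw [abs_mul_abs_self]
            exact Finset.single_le_sum (f := fun j => (x j - y j) * (x j - y j))
              (fun j _ => mul_self_nonneg _) (Finset.mem_univ i)
          calc ‖(x - y) i‖ = |x i - y i| := by simp [Real.norm_eq_abs]
            _ = Real.sqrt (|x i - y i| * |x i - y i|) :=
                (Real.sqrt_mul_self (abs_nonneg _)).symm
            _ ≤ Real.sqrt (∑ j, (x j - y j) * (x j - y j)) := Real.sqrt_le_sqrt h6
        have := mul_le_mul h5 h5 (norm_nonneg _) hnn
        rwa [Real.mul_self_sqrt hS] at this
      exact le_trans h4 (le_trans (hkey x y) h3)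
    have := le_of_mul_le_mul_right hsq hd
    -- ‖x-y‖ ≤ N * ‖F x - F y‖
    linarith
  -- closed range
  have hclosed : IsClosed (Set.range F) := by
    apply IsSeqClosed.isClosed
    intro u y hu hy
    choose v hv using hu
    have hc : CauchySeq u := hy.cauchySeq
    have hcv : CauchySeq v := by
      rw [Metric.cauchySeq_iff] at hc ⊢
      intro δ hδ
      obtain ⟨M, hM⟩ := hc (δ / (N + 1)) (by positivity)
      refine ⟨M, fun m hm n hn => ?_⟩
      have h1 : dist (v m) (v n) ≤ N * dist (F (v m)) (F (v n)) := hAL _ _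
      rw [hv m, hv n] at h1
      have h2 : dist (u m) (u n) < δ / (N + 1) := hM m hm n hn
      have h3 : (N : ℝ) * dist (u m) (u n) ≤ (N : ℝ) * (δ / (N + 1)) :=
        mul_le_mul_of_nonneg_left h2.le (Nat.cast_nonneg N)
      have h4 : (N : ℝ) * (δ / (N + 1)) < δ := by
        rw [div_eq_inv_mul]
        have hN1 : (0:ℝ) < (N:ℝ) + 1 := by positivity
        rw [show (N:ℝ) * (((N:ℝ)+1)⁻¹ * δ) = ((N:ℝ)/((N:ℝ)+1)) * δ by ring]
        have : (N:ℝ)/((N:ℝ)+1) < 1 := (div_lt_one hN1).2 (by linarith)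
        nlinarith
      calc dist (v m) (v n) ≤ (N : ℝ) * dist (u m) (u n) := h1
        _ < δ := lt_of_le_of_lt h3 h4
    obtain ⟨w, hw⟩ := cauchySeq_tendsto_of_complete hcv
    refine ⟨w, ?_⟩
    have h5 : Filter.Tendsto (fun n => F (v n)) Filter.atTop (𝓝 (F w)) :=
      (hFC1.continuous.tendsto w).comp hw
    have h6 : (fun n => F (v n)) = u := funext hv
    rw [h6] at h5
    exact tendsto_nhds_unique h5 hy
  -- the derivative is everywhere an equivalence
  have hequiv : ∀ x : Fin N → ℝ, ∃ e : (Fin N → ℝ) ≃L[ℝ] (Fin N → ℝ),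
      HasStrictFDerivAt F (e : (Fin N → ℝ) →L[ℝ] (Fin N → ℝ)) x := by
    intro x
    set A := fderiv ℝ F x with hA
    have hsd : HasStrictFDerivAt F A x := hFC1.contDiffAt.hasStrictFDerivAt one_ne_zero
    -- lower bound on the quadratic form of A
    have hlow : ∀ v : Fin N → ℝ, (∑ i, v i * v i) ≤ ∑ i, A v i * v i := by
      intro v
      have hline : HasDerivAt (fun s : ℝ => F (x + s • v)) (A v) 0 := by
        have hc : HasDerivAt (fun s : ℝ => x + s • v) v 0 := by
          simpa using ((hasDerivAt_id (0:ℝ)).smul_const v).const_add x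
        have := (hdF (x + (0:ℝ) • v)).hasFDerivAt.comp_hasDerivAt 0 hc
        simpa [Function.comp_def] using this
      set φ : ℝ → ℝ := fun s => ∑ i, F (x + s • v) i * v i with hφdef
      have hφ : HasDerivAt φ (∑ i, A v i * v i) 0 := by
        apply HasDerivAt.fun_sum
        intro i _
        have hcomp : HasDerivAt (fun s : ℝ => F (x + s • v) i) (A v i) 0 := by
          have := (ContinuousLinearMap.proj (R := ℝ) (φ := fun _ : Fin N => ℝ)
            i).hasFDerivAt.comp_hasDerivAt 0 hline
          simpa [Function.comp_def] using this
        simpa using hcomp.mul_const (v i)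
      have hslope : ∀ s ∈ Set.Ioi (0:ℝ), (∑ i, v i * v i) ≤ slope φ 0 s := by
        intro s hs
        rw [Set.mem_Ioi] at hs
        have hk := hkey (x + s • v) x
        simp only [Pi.add_apply, Pi.smul_apply, smul_eq_mul, add_sub_cancel_left] at hk
        have hL : (∑ i, (s * v i) * (s * v i)) = s^2 * ∑ i, v i * v i := by
          rw [Finset.mul_sum]
          exact Finset.sum_congr rfl fun i _ => by ring
        have hφ0 : φ 0 = ∑ i, F x i * v i := by
          simp [hφdef]
        have hR : (∑ i, (F (x + s • v) i - F x i) * (s * v i)) = s * (φ s - φ 0) := by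
          rw [hφ0, hφdef]
          rw [← Finset.sum_sub_distrib, Finset.mul_sum]
          exact Finset.sum_congr rfl fun i _ => by ring
        rw [hL, hR] at hk
        rw [slope_def_field, sub_zero, le_div_iff₀ hs]
        nlinarith [hk]
      have hlim : Filter.Tendsto (slope φ 0) (𝓝[>] (0:ℝ)) (𝓝 (∑ i, A v i * v i)) :=
        (hasDerivAt_iff_tendsto_slope.1 hφ).mono_left
          (nhdsWithin_mono _ fun s hs => ne_of_gt hs)
      exact ge_of_tendsto hlim
        (eventually_mem_nhdsWithin.mono fun s hs => hslope s hs)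
    -- A is bijective
    have hAinj : Function.Injective A := by
      intro v w hvw
      have h0 : A (v - w) = 0 := by rw [map_sub, hvw, sub_self]
      have h1 := hlow (v - w)
      rw [h0] at h1
      simp only [Pi.zero_apply, zero_mul, Finset.sum_const_zero] at h1
      have h2 : ∀ i, v i = w i := by
        intro i
        have h3 : ((v - w) i) * ((v - w) i) ≤ ∑ j, ((v - w) j) * ((v - w) j) :=
          Finset.single_le_sum (f := fun j => ((v - w) j) * ((v - w) j))
            (fun j _ => mul_self_nonneg _) (Finset.mem_univ i)
        have h4 : (v - w) i = 0 := by nlinarith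
        simpa [sub_eq_zero] using h4
      funext i; exact h2 i
    have hAbij : Function.Bijective A := by
      have := (LinearMap.injective_iff_surjective (f := (A : (Fin N → ℝ) →ₗ[ℝ] (Fin N → ℝ)))).1
      exact ⟨hAinj, this hAinj⟩
    set e : (Fin N → ℝ) ≃L[ℝ] (Fin N → ℝ) :=
      (LinearEquiv.ofBijective (A : (Fin N → ℝ) →ₗ[ℝ] (Fin N → ℝ)) hAbij).toContinuousLinearEquiv
      with he
    have hcoe : (e : (Fin N → ℝ) →L[ℝ] (Fin N → ℝ)) = A := by
      apply ContinuousLinearMap.ext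
      intro w
      rfl
    exact ⟨e, by rw [hcoe]; exact hsd⟩
  -- open range
  have hopen : IsOpen (Set.range F) := by
    rw [isOpen_iff_mem_nhds]
    rintro y ⟨x, rfl⟩
    obtain ⟨e, he⟩ := hequiv x
    rw [← he.map_nhds_eq_of_equiv, Filter.mem_map]
    exact Filter.mem_of_superset Filter.univ_mem fun z _ => Set.mem_range_self z
  -- surjectivity
  have hsurj : Function.Surjective F := by
    rcases Set.range_nonempty F with hne
    have : Set.range F = Set.univ := IsClopen.eq_univ ⟨hclosed, hopen⟩ hne
    exact Set.range_eq_univ.1 this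
  have hbij : Function.Bijective F := ⟨hinj, hsurj⟩
  have hri : ∀ y, F (Function.invFun F y) = y := fun y =>
    Function.rightInverse_invFun hsurj y
  -- the inverse is C¹
  have hinvC1 : ContDiff ℝ 1 (Function.invFun F) := by
    apply contDiff_iff_contDiffAt.2
    intro y
    obtain ⟨x, rfl⟩ := hsurj y
    obtain ⟨e, he⟩ := hequiv x
    have hsd' : HasFDerivAt F (e : (Fin N → ℝ) →L[ℝ] (Fin N → ℝ)) x := he.hasFDerivAt
    have hC : ContDiffAt ℝ 1 (hFC1.contDiffAt.localInverse hsd' one_ne_zero) (F x) :=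
      hFC1.contDiffAt.to_localInverse hsd' one_ne_zero
    have hev : ∀ᶠ z in 𝓝 (F x), F (hFC1.contDiffAt.localInverse hsd' one_ne_zero z) = z :=
      (hFC1.contDiffAt.hasStrictFDerivAt' hsd' one_ne_zero).eventually_right_inverse
    have heq : Function.invFun F =ᶠ[𝓝 (F x)] hFC1.contDiffAt.localInverse hsd' one_ne_zero := by
      filter_upwards [hev] with z hz
      exact hinj ((hri z).trans hz.symm)
    exact hC.congr_of_eventuallyEq heq
  refine ⟨hbij, hFC1, hinvC1, ?_⟩
  intro y
  refine ⟨Function.invFun F y, ?_, ?_⟩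
  · intro i
    have := hri y
    conv_lhs => rw [← this]
    exact hF _ i
  · intro x' hx'
    have hFx' : F x' = y := by
      funext i
      rw [hF x' i]
      exact (hx' i).symm
    apply hinj
    rw [hFx', hri y]
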